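/- For nonzero PSD matrices K_X, K_Y, the squared normalized Bures similarity is bounded by CKA: CKA(K_X,K_Y)/√(rank(K_X)·rank(K_Y)) ≤ NBS(K_X,K_Y)² ≤ min(rank K_X, rank K_Y) · CKA(K_X,K_Y). -/

import Mathlib

open Matrix Finset

lemma real_conjTranspose_eq {m n : ℕ} (A : Matrix (Fin m) (Fin n) ℝ) : Aᴴ = Aᵀ := rfl

lemma psd_tmul {m n : ℕ} (A : Matrix (Fin m) (Fin n) ℝ) : (Aᵀ * A).PosSemidef := by
  have h := Matrix.posSemidef_conjTranspose_mul_self A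
  rwa [real_conjTranspose_eq] at h

lemma psd_gram {m n : ℕ} (A : Matrix (Fin m) (Fin n) ℝ) : (A * Aᵀ).PosSemidef := by
  have h := Matrix.posSemidef_self_mul_conjTranspose A
  rwa [real_conjTranspose_eq] at h

namespace Matrix.PosSemidef

open scoped ComplexOrder

/-- The square root of a positive semidefinite matrix, as defined in the older Mathlib. -/
noncomputable def sqrt {n 𝕜 : Type*} [Fintype n] [RCLike 𝕜] [DecidableEq n] {A : Matrix n n 𝕜}
    (hA : A.PosSemidef) : Matrix n n 𝕜 :=
  hA.1.eigenvectorUnitary.1 * diagonal ((↑) ∘ (√·) ∘ hA.1.eigenvalues) *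
    (star hA.1.eigenvectorUnitary : Matrix n n 𝕜)

lemma posSemidef_sqrt {n 𝕜 : Type*} [Fintype n] [RCLike 𝕜] [DecidableEq n] {A : Matrix n n 𝕜}
    (hA : A.PosSemidef) : hA.sqrt.PosSemidef := by
  have hd : (diagonal (((↑) : ℝ → 𝕜) ∘ (√·) ∘ hA.1.eigenvalues)).PosSemidef :=
    posSemidef_diagonal_iff.mpr fun i => by simp [Real.sqrt_nonneg]
  exact hd.mul_mul_conjTranspose_same (hA.1.eigenvectorUnitary : Matrix n n 𝕜)

end Matrix.PosSemidef

lemma psd_sand {M : ℕ} {Kx Ky : Matrix (Fin M) (Fin M) ℝ} (hx : Kx.PosSemidef) (hy : Ky.PosSemidef) :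
    (hx.sqrt * Ky * hx.sqrt).PosSemidef := by
  have h := hy.mul_mul_conjTranspose_same hx.sqrt
  rwa [hx.posSemidef_sqrt.isHermitian.eq] at h

/-- Nuclear norm: sum of singular values, i.e. `Tr[(AᵀA)^{1/2}]`. -/
noncomputable def nuclearNorm {m n : ℕ} (A : Matrix (Fin m) (Fin n) ℝ) : ℝ :=
  (Matrix.PosSemidef.sqrt (psd_tmul A)).trace

/-- Frobenius norm. -/
noncomputable def frobNorm {m n : ℕ} (A : Matrix (Fin m) (Fin n) ℝ) : ℝ :=
  Real.sqrt (Matrix.trace (Aᵀ * A))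

/-- Fidelity `Tr[(Kx^{1/2} Ky Kx^{1/2})^{1/2}]` between PSD matrices. -/
noncomputable def fidelity {M : ℕ} {Kx Ky : Matrix (Fin M) (Fin M) ℝ}
    (hx : Kx.PosSemidef) (hy : Ky.PosSemidef) : ℝ :=
  (Matrix.PosSemidef.sqrt (psd_sand hx hy)).trace

/- ### Auxiliary lemmas -/

lemma trace_unitary_conj {n : ℕ} (U : Matrix.unitaryGroup (Fin n) ℝ) (D : Matrix (Fin n) (Fin n) ℝ) :
    Matrix.trace ((U : Matrix (Fin n) (Fin n) ℝ) * D * star (U : Matrix (Fin n) (Fin n) ℝ)) = D.trace := by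
  rw [Matrix.trace_mul_cycle, Matrix.UnitaryGroup.star_mul_self, Matrix.one_mul]

lemma unitary_conj_mul {n : ℕ} (U : Matrix.unitaryGroup (Fin n) ℝ) (D E : Matrix (Fin n) (Fin n) ℝ) :
    ((U : Matrix (Fin n) (Fin n) ℝ) * D * star (U : Matrix (Fin n) (Fin n) ℝ)) *
    ((U : Matrix (Fin n) (Fin n) ℝ) * E * star (U : Matrix (Fin n) (Fin n) ℝ)) =
    (U : Matrix (Fin n) (Fin n) ℝ) * (D * E) * star (U : Matrix (Fin n) (Fin n) ℝ) := by
  simp only [Matrix.mul_assoc]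
  rw [← Matrix.mul_assoc (star (U : Matrix (Fin n) (Fin n) ℝ)) (U : Matrix (Fin n) (Fin n) ℝ),
    Matrix.UnitaryGroup.star_mul_self, Matrix.one_mul]

lemma psd_sqrt_mul_self {n : ℕ} {A : Matrix (Fin n) (Fin n) ℝ} (hA : A.PosSemidef) :
    hA.sqrt * hA.sqrt = A := by
  rw [Matrix.PosSemidef.sqrt, unitary_conj_mul, Matrix.diagonal_mul_diagonal]
  conv_rhs => rw [hA.1.spectral_theorem, Unitary.conjStarAlgAut_apply]
  congr 3
  funext i
  simp [Real.mul_self_sqrt (hA.eigenvalues_nonneg i)]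

lemma herm_trace {n : ℕ} {A : Matrix (Fin n) (Fin n) ℝ} (hA : A.IsHermitian) :
    A.trace = ∑ i, hA.eigenvalues i := by
  conv_lhs => rw [hA.spectral_theorem, Unitary.conjStarAlgAut_apply]
  rw [trace_unitary_conj, Matrix.trace_diagonal]
  simp [RCLike.ofReal]

lemma herm_trace_sq {n : ℕ} {A : Matrix (Fin n) (Fin n) ℝ} (hA : A.IsHermitian) :
    (A * A).trace = ∑ i, hA.eigenvalues i ^ 2 := by
  conv_lhs => rw [hA.spectral_theorem, Unitary.conjStarAlgAut_apply]
  rw [unitary_conj_mul, trace_unitary_conj, Matrix.diagonal_mul_diagonal, Matrix.trace_diagonal]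
  simp [RCLike.ofReal, sq]

lemma psd_trace_sqrt {n : ℕ} {A : Matrix (Fin n) (Fin n) ℝ} (hA : A.PosSemidef) :
    hA.sqrt.trace = ∑ i, Real.sqrt (hA.1.eigenvalues i) := by
  rw [Matrix.PosSemidef.sqrt, trace_unitary_conj, Matrix.trace_diagonal]
  simp [RCLike.ofReal]

lemma psd_trace_pos {n : ℕ} {A : Matrix (Fin n) (Fin n) ℝ} (hA : A.PosSemidef) (h0 : A ≠ 0) :
    0 < A.trace := by
  rw [herm_trace hA.1]
  apply Finset.sum_pos' (fun i _ => hA.eigenvalues_nonneg i)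
  by_contra hall
  push_neg at hall
  apply h0
  have hz : ∀ i, hA.1.eigenvalues i = 0 := fun i =>
    le_antisymm (hall i (Finset.mem_univ i)) (hA.eigenvalues_nonneg i)
  have hd : diagonal (RCLike.ofReal ∘ hA.1.eigenvalues) = (0 : Matrix (Fin n) (Fin n) ℝ) := by
    ext i j
    by_cases hij : i = j <;> simp [Matrix.diagonal, hij, hz]
  conv_lhs => rw [hA.1.spectral_theorem, Unitary.conjStarAlgAut_apply]
  rw [hd, Matrix.mul_zero, Matrix.zero_mul]

lemma scalar_env {n : ℕ} (f : Fin n → ℝ) (hf : ∀ i, 0 ≤ f i) :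
    (∑ i, f i ^ 2) ≤ (∑ i, f i) ^ 2 ∧
    (∑ i, f i) ^ 2 ≤ (univ.filter (fun i => f i ≠ 0)).card * ∑ i, f i ^ 2 := by
  constructor
  · exact Finset.sum_sq_le_sq_sum_of_nonneg (fun i _ => hf i)
  · have h1 : ∑ i, f i = ∑ i ∈ univ.filter (fun i => f i ≠ 0), f i := by
      rw [Finset.sum_filter_ne_zero]
    have h2 : (∑ i ∈ univ.filter (fun i => f i ≠ 0), f i) ^ 2 ≤
        (univ.filter (fun i => f i ≠ 0)).card * ∑ i ∈ univ.filter (fun i => f i ≠ 0), f i ^ 2 :=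
      sq_sum_le_card_mul_sum_sq
    have h3 : ∑ i ∈ univ.filter (fun i => f i ≠ 0), f i ^ 2 ≤ ∑ i, f i ^ 2 :=
      Finset.sum_le_sum_of_subset_of_nonneg (Finset.filter_subset _ _)
        (fun i _ _ => sq_nonneg _)
    rw [h1]
    exact h2.trans (mul_le_mul_of_nonneg_left h3 (by positivity))

lemma rank_filter {n : ℕ} {A : Matrix (Fin n) (Fin n) ℝ} (hA : A.IsHermitian) :
    A.rank = (univ.filter (fun i => hA.eigenvalues i ≠ 0)).card := by
  rw [hA.rank_eq_card_non_zero_eigs, Fintype.card_subtype]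

lemma rank_sqrt {n : ℕ} {A : Matrix (Fin n) (Fin n) ℝ} (hA : A.PosSemidef) :
    hA.sqrt.rank = A.rank := by
  conv_rhs => rw [← psd_sqrt_mul_self hA]
  rw [show hA.sqrt * hA.sqrt = hA.sqrtᴴ * hA.sqrt by rw [hA.posSemidef_sqrt.isHermitian.eq],
    Matrix.rank_conjTranspose_mul_self]

/-- Envelope for a PSD matrix: `Tr K² ≤ (Tr K)² ≤ rank K · Tr K²`. -/
lemma psd_env {n : ℕ} {A : Matrix (Fin n) (Fin n) ℝ} (hA : A.PosSemidef) :
    (A * A).trace ≤ A.trace ^ 2 ∧ A.trace ^ 2 ≤ (A.rank : ℝ) * (A * A).trace := by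
  have h := scalar_env hA.1.eigenvalues hA.eigenvalues_nonneg
  rw [herm_trace hA.1, herm_trace_sq hA.1, rank_filter hA.1]
  exact h

/-- Envelope for the square root: `Tr A ≤ (Tr √A)² ≤ rank A · Tr A`. -/
lemma psd_sqrt_env {n : ℕ} {A : Matrix (Fin n) (Fin n) ℝ} (hA : A.PosSemidef) :
    A.trace ≤ hA.sqrt.trace ^ 2 ∧ hA.sqrt.trace ^ 2 ≤ (A.rank : ℝ) * A.trace := by
  have h := scalar_env (fun i => Real.sqrt (hA.1.eigenvalues i)) (fun i => Real.sqrt_nonneg _)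
  have hsq : ∀ i, Real.sqrt (hA.1.eigenvalues i) ^ 2 = hA.1.eigenvalues i :=
    fun i => Real.sq_sqrt (hA.eigenvalues_nonneg i)
  simp only [hsq] at h
  have hfil : (univ.filter (fun i => Real.sqrt (hA.1.eigenvalues i) ≠ 0))
      = (univ.filter (fun i => hA.1.eigenvalues i ≠ 0)) := by
    apply Finset.filter_congr
    intro i _
    constructor
    · intro hs he
      exact hs (by rw [he, Real.sqrt_zero])
    · intro he hs
      exact he (le_antisymm (Real.sqrt_eq_zero'.mp hs) (hA.eigenvalues_nonneg i))
  rw [hfil] at h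
  rw [psd_trace_sqrt hA, herm_trace hA.1, rank_filter hA.1]
  exact h

theorem nbs_sq_cka_envelope (M : ℕ) (Kx Ky : Matrix (Fin M) (Fin M) ℝ)
    (hx : Kx.PosSemidef) (hy : Ky.PosSemidef) (hx0 : Kx ≠ 0) (hy0 : Ky ≠ 0) :
    (Matrix.trace (Kx * Ky) / Real.sqrt (Matrix.trace (Kx * Kx) * Matrix.trace (Ky * Ky))) /
        Real.sqrt ((Kx.rank : ℝ) * (Ky.rank : ℝ)) ≤
      (fidelity hx hy / Real.sqrt (Matrix.trace Kx * Matrix.trace Ky)) ^ 2 ∧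
    (fidelity hx hy / Real.sqrt (Matrix.trace Kx * Matrix.trace Ky)) ^ 2 ≤
      (min Kx.rank Ky.rank : ℝ) *
        (Matrix.trace (Kx * Ky) / Real.sqrt (Matrix.trace (Kx * Kx) * Matrix.trace (Ky * Ky))) := by
  set P := hx.sqrt * Ky * hx.sqrt with hPdef
  have hP : P.PosSemidef := psd_sand hx hy
  -- trace of the sandwich equals Tr (Kx Ky)
  have htrP : P.trace = Matrix.trace (Kx * Ky) := by
    rw [hPdef, Matrix.trace_mul_cycle, psd_sqrt_mul_self hx]
  -- rank of the sandwich
  have hPA : P = (hy.sqrt * hx.sqrt)ᴴ * (hy.sqrt * hx.sqrt) := by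
    rw [Matrix.conjTranspose_mul, hx.posSemidef_sqrt.isHermitian.eq,
      hy.posSemidef_sqrt.isHermitian.eq, hPdef]
    conv_lhs => rw [← psd_sqrt_mul_self hy]
    simp only [Matrix.mul_assoc]
  have hrankP : P.rank = (hy.sqrt * hx.sqrt).rank := by
    rw [hPA, Matrix.rank_conjTranspose_mul_self]
  have hrPx : P.rank ≤ Kx.rank := by
    rw [hrankP, ← rank_sqrt hx]
    exact Matrix.rank_mul_le_right _ _
  have hrPy : P.rank ≤ Ky.rank := by
    rw [hrankP, ← rank_sqrt hy]
    exact Matrix.rank_mul_le_left _ _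
  have hrPmin : (P.rank : ℝ) ≤ (min Kx.rank Ky.rank : ℝ) := by
    exact_mod_cast le_min hrPx hrPy
  -- abbreviations
  set F := fidelity hx hy with hFdef
  have hFeq : F = hP.sqrt.trace := rfl
  set a := Matrix.trace (Kx * Ky) with hadef
  set tx := Matrix.trace Kx with htxdef
  set ty := Matrix.trace Ky with htydef
  set qx := Matrix.trace (Kx * Kx) with hqxdef
  set qy := Matrix.trace (Ky * Ky) with hqydef
  -- envelopes
  have hFenv := psd_sqrt_env hP
  rw [← hFeq, htrP] at hFenv
  obtain ⟨hF1, hF2⟩ := hFenv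
  obtain ⟨hx2, hx3⟩ := psd_env hx
  obtain ⟨hy2, hy3⟩ := psd_env hy
  rw [← hqxdef, ← htxdef] at hx2 hx3
  rw [← hqydef, ← htydef] at hy2 hy3
  -- positivity
  have htx : 0 < tx := psd_trace_pos hx hx0
  have hty : 0 < ty := psd_trace_pos hy hy0
  have ha : 0 ≤ a := by
    rw [← htrP, herm_trace hP.1]
    exact Finset.sum_nonneg fun i _ => hP.eigenvalues_nonneg i
  have hF0 : 0 ≤ F := by
    rw [hFeq, psd_trace_sqrt hP]
    exact Finset.sum_nonneg fun i _ => Real.sqrt_nonneg _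
  have hrxqx : 0 < (Kx.rank : ℝ) * qx := lt_of_lt_of_le (pow_pos htx 2) hx3
  have hryqy : 0 < (Ky.rank : ℝ) * qy := lt_of_lt_of_le (pow_pos hty 2) hy3
  have hqx : 0 < qx := by
    rcases mul_pos_iff.mp hrxqx with ⟨_, h⟩ | ⟨h, _⟩
    · exact h
    · exact absurd h (not_lt.mpr (Nat.cast_nonneg _))
  have hqy : 0 < qy := by
    rcases mul_pos_iff.mp hryqy with ⟨_, h⟩ | ⟨h, _⟩
    · exact h
    · exact absurd h (not_lt.mpr (Nat.cast_nonneg _))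
  have hrx : 0 < (Kx.rank : ℝ) := by
    rcases mul_pos_iff.mp hrxqx with ⟨h, _⟩ | ⟨_, h⟩
    · exact h
    · exact absurd h (not_lt.mpr hqx.le)
  have hry : 0 < (Ky.rank : ℝ) := by
    rcases mul_pos_iff.mp hryqy with ⟨h, _⟩ | ⟨_, h⟩
    · exact h
    · exact absurd h (not_lt.mpr hqy.le)
  have hqxy : 0 < Real.sqrt (qx * qy) := Real.sqrt_pos.mpr (mul_pos hqx hqy)
  have hrxy : 0 < Real.sqrt ((Kx.rank : ℝ) * (Ky.rank : ℝ)) :=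
    Real.sqrt_pos.mpr (mul_pos hrx hry)
  have htxty : 0 < tx * ty := mul_pos htx hty
  -- rewrite the NBS square
  have hnbs : (F / Real.sqrt (tx * ty)) ^ 2 = F ^ 2 / (tx * ty) := by
    rw [div_pow, Real.sq_sqrt htxty.le]
  -- √(qx qy) ≤ tx ty
  have hden1 : Real.sqrt (qx * qy) ≤ tx * ty := by
    calc Real.sqrt (qx * qy) ≤ Real.sqrt ((tx * ty) ^ 2) := by
          apply Real.sqrt_le_sqrt
          calc qx * qy ≤ tx ^ 2 * ty ^ 2 :=
                mul_le_mul hx2 hy2 hqy.le (sq_nonneg _)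
            _ = (tx * ty) ^ 2 := by ring
      _ = tx * ty := Real.sqrt_sq htxty.le
  -- tx ty ≤ √(qx qy) √(rx ry)
  have hden2 : tx * ty ≤ Real.sqrt (qx * qy) * Real.sqrt ((Kx.rank : ℝ) * (Ky.rank : ℝ)) := by
    calc tx * ty = Real.sqrt ((tx * ty) ^ 2) := (Real.sqrt_sq htxty.le).symm
      _ ≤ Real.sqrt (qx * qy * ((Kx.rank : ℝ) * (Ky.rank : ℝ))) := by
          apply Real.sqrt_le_sqrt
          calc (tx * ty) ^ 2 = tx ^ 2 * ty ^ 2 := by ring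
            _ ≤ ((Kx.rank : ℝ) * qx) * ((Ky.rank : ℝ) * qy) :=
                mul_le_mul hx3 hy3 (sq_nonneg _) hrxqx.le
            _ = qx * qy * ((Kx.rank : ℝ) * (Ky.rank : ℝ)) := by ring
      _ = Real.sqrt (qx * qy) * Real.sqrt ((Kx.rank : ℝ) * (Ky.rank : ℝ)) :=
          Real.sqrt_mul (mul_pos hqx hqy).le _
  rw [hnbs]
  constructor
  · -- lower bound
    calc a / Real.sqrt (qx * qy) / Real.sqrt ((Kx.rank : ℝ) * (Ky.rank : ℝ))
        = a / (Real.sqrt (qx * qy) * Real.sqrt ((Kx.rank : ℝ) * (Ky.rank : ℝ))) := by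
          rw [div_div]
      _ ≤ a / (tx * ty) := by
          apply div_le_div_of_nonneg_left ha htxty hden2
      _ ≤ F ^ 2 / (tx * ty) := by
          apply div_le_div_of_nonneg_right hF1 htxty.le
  · -- upper bound
    calc F ^ 2 / (tx * ty)
        ≤ ((min Kx.rank Ky.rank : ℝ) * a) / (tx * ty) := by
          apply div_le_div_of_nonneg_right
            (hF2.trans (mul_le_mul_of_nonneg_right hrPmin ha)) htxty.le
      _ ≤ ((min Kx.rank Ky.rank : ℝ) * a) / Real.sqrt (qx * qy) := by
          apply div_le_div_of_nonneg_left (by positivity) hqxy hden1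
      _ = (min Kx.rank Ky.rank : ℝ) * (a / Real.sqrt (qx * qy)) := by
          rw [mul_div_assoc]
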